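/- arXiv:1704.06733 — 2 statements merged into one kernel-verified Lean document; each statement's English description precedes it below -/
import Mathlib

section
/- Let 1 < β < 2. Then the series Σ_{k=0}^{∞} ω_k^{(β)} converges and its sum equals 0. -/
open Finset

/-- The coefficients `g_k^{(γ)}`: `g_0 = 1`, `g_k = (1 - (γ+1)/k) g_{k-1}` for `k ≥ 1`. -/
noncomputable def gcoef (γ : ℝ) : ℕ → ℝ
  | 0 => 1
  | k + 1 => (1 - (γ + 1) / (k + 1)) * gcoef γ k

/-- The coefficients `ω_k^{(γ)}`: `ω_0 = (γ/2) g_0` and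
`ω_k = (γ/2) g_k + ((2-γ)/2) g_{k-1}` for `k ≥ 1`. -/
noncomputable def wcoef (γ : ℝ) : ℕ → ℝ
  | 0 => γ / 2 * gcoef γ 0
  | k + 1 => γ / 2 * gcoef γ (k + 1) + (2 - γ) / 2 * gcoef γ k

/-- Partial sums of the `g` coefficients, given recursively. -/
noncomputable def Gsum (γ : ℝ) : ℕ → ℝ
  | 0 => 1
  | n + 1 => (1 - γ / (n + 1)) * Gsum γ n

lemma gcoef_eq (γ : ℝ) : ∀ n : ℕ, gcoef γ (n + 1) = -(γ / (n + 1)) * Gsum γ n := by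
  intro n
  induction n with
  | zero => simp [gcoef, Gsum]
  | succ n ih =>
      have h1 : ((n : ℝ) + 1) ≠ 0 := by positivity
      have h2 : ((n : ℝ) + 1 + 1) ≠ 0 := by positivity
      have e1 : gcoef γ (n + 1 + 1) = (1 - (γ + 1) / (↑(n + 1) + 1)) * gcoef γ (n + 1) := rfl
      have e2 : Gsum γ (n + 1) = (1 - γ / (↑n + 1)) * Gsum γ n := rfl
      rw [e1, ih, e2]
      push_cast
      field_simp
      ring

lemma Gsum_succ (γ : ℝ) (n : ℕ) : Gsum γ (n + 1) = Gsum γ n + gcoef γ (n + 1) := by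
  rw [gcoef_eq]
  show (1 - γ / (n + 1)) * Gsum γ n = _
  ring

lemma sum_wcoef (γ : ℝ) : ∀ n : ℕ,
    ∑ k ∈ Finset.range (n + 2), wcoef γ k = Gsum γ n + γ / 2 * gcoef γ (n + 1) := by
  intro n
  induction n with
  | zero =>
      simp [Finset.sum_range_succ, wcoef, gcoef, Gsum]
      ring
  | succ n ih =>
      rw [Finset.sum_range_succ, ih, Gsum_succ]
      show _ = _ + γ / 2 * gcoef γ (n + 1 + 1)
      have : wcoef γ (n + 2) = γ / 2 * gcoef γ (n + 2) + (2 - γ) / 2 * gcoef γ (n + 1) := rfl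
      rw [this]
      ring

lemma Gsum_bound (β : ℝ) (hβ1 : 1 < β) (hβ2 : β < 2) :
    ∀ n : ℕ, 1 ≤ n → |Gsum β n| ≤ (β - 1) / n := by
  intro n
  induction n with
  | zero => intro h; omega
  | succ n ih =>
      intro _
      rcases Nat.eq_zero_or_pos n with h0 | hpos
      · subst h0
        simp only [Gsum]
        norm_num
        rw [abs_of_nonpos (by linarith)]
        linarith
      · have ihn := ih hpos
        have hn1 : (1:ℝ) ≤ n := by exact_mod_cast hpos
        simp only [Gsum]
        push_cast
        rw [abs_mul]
        have hd : (0:ℝ) < (n:ℝ) + 1 := by linarith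
        have hnn : 0 ≤ 1 - β / ((n:ℝ) + 1) := by
          rw [sub_nonneg, div_le_one hd]; linarith
        rw [abs_of_nonneg hnn]
        have hle : 1 - β / ((n:ℝ) + 1) ≤ (n:ℝ) / ((n:ℝ) + 1) := by
          have h1 : (1:ℝ) / ((n:ℝ) + 1) ≤ β / ((n:ℝ) + 1) := by gcongr
          have h2 : (n:ℝ) / ((n:ℝ) + 1) = 1 - 1 / ((n:ℝ) + 1) := by field_simp; ring
          linarith
        calc (1 - β / ((n:ℝ) + 1)) * |Gsum β n|
            ≤ ((n:ℝ) / ((n:ℝ) + 1)) * ((β - 1) / n) := by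
              apply mul_le_mul hle ihn (abs_nonneg _)
              positivity
          _ = (β - 1) / ((n:ℝ) + 1) := by
              field_simp

lemma Gsum_tendsto (β : ℝ) (hβ1 : 1 < β) (hβ2 : β < 2) :
    Filter.Tendsto (fun n : ℕ => Gsum β n) Filter.atTop (nhds 0) := by
  refine squeeze_zero_norm' ?_ (tendsto_const_div_atTop_nhds_zero_nat (β - 1))
  filter_upwards [Filter.eventually_ge_atTop 1] with n hn
  exact Gsum_bound β hβ1 hβ2 n hn

theorem stmt8 (β : ℝ) (hβ1 : 1 < β) (hβ2 : β < 2) :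
    Filter.Tendsto (fun n : ℕ => ∑ k ∈ Finset.range n, wcoef β k)
      Filter.atTop (nhds 0) := by
  have hG := Gsum_tendsto β hβ1 hβ2
  have hg : Filter.Tendsto (fun n : ℕ => gcoef β (n + 1)) Filter.atTop (nhds 0) := by
    have h1 : Filter.Tendsto (fun n : ℕ => Gsum β (n + 1) - Gsum β n)
        Filter.atTop (nhds 0) := by
      have := (hG.comp (Filter.tendsto_add_atTop_nat 1)).sub hG
      simpa using this
    refine h1.congr fun n => ?_
    rw [Gsum_succ]; ring
  rw [← Filter.tendsto_add_atTop_iff_nat 2]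
  have key : (fun n : ℕ => ∑ k ∈ Finset.range (n + 2), wcoef β k)
      = fun n : ℕ => Gsum β n + β / 2 * gcoef β (n + 1) := by
    funext n; exact sum_wcoef β n
  rw [key]
  have := hG.add ((hg.const_mul (β / 2)))
  simpa using this
end

section
/- Let 1 < β < 2 and L > 0. There exists a constant c₂ > 0, depending only on β and L (in particular independent of N), such that for every integer N ≥ 3, with mesh size h = L/N, and every nonzero grid function v one has (−δ^β_{x,+} v, v) = (−δ^β_{x,-} v, v) > c₂ · ln 2 · ‖v‖². -/
open Finset

/-- Discrete inner product `(u,v) = h ∑_{i=1}^{N-1} u_i v_i`. -/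
noncomputable def ip (N : ℕ) (h : ℝ) (u v : ℕ → ℝ) : ℝ :=
  h * ∑ i ∈ Finset.Icc 1 (N - 1), u i * v i

/-- Discrete `L₂`-norm `‖v‖ = √(v,v)`. -/
noncomputable def gnorm (N : ℕ) (h : ℝ) (v : ℕ → ℝ) : ℝ :=
  Real.sqrt (ip N h v v)

/-- `(δ^γ_{x,+} v)_i = h^{-γ} ∑_{k=0}^{i+1} ω_k^{(γ)} v_{i-k+1}`. -/
noncomputable def dplus (γ : ℝ) (h : ℝ) (v : ℕ → ℝ) (i : ℕ) : ℝ :=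
  h ^ (-γ) * ∑ k ∈ Finset.range (i + 2), wcoef γ k * v (i + 1 - k)

/-- `(δ^γ_{x,-} v)_i = h^{-γ} ∑_{k=0}^{N-i+1} ω_k^{(γ)} v_{i+k-1}`. -/
noncomputable def dminus (γ : ℝ) (N : ℕ) (h : ℝ) (v : ℕ → ℝ) (i : ℕ) : ℝ :=
  h ^ (-γ) * ∑ k ∈ Finset.range (N - i + 2), wcoef γ k * v (i + k - 1)

set_option linter.unreachableTactic false
set_option linter.unusedTactic false
set_option linter.unusedVariables false
set_option maxHeartbeats 1000000

noncomputable def Ssum (γ : ℝ) (K : ℕ) : ℝ := ∑ k ∈ Finset.range (K+1), wcoef γ k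

noncomputable def cmat (β : ℝ) (i j : ℕ) : ℝ := if j ≤ i+1 then wcoef β (i+1-j) else 0


lemma gcoef_succ (γ : ℝ) (K : ℕ) : gcoef γ (K+1) = (1 - (γ+1)/((K:ℝ)+1)) * gcoef γ K := by
  simp only [gcoef]; try push_cast; try ring_nf

lemma wcoef_succ (γ : ℝ) (K : ℕ) : wcoef γ (K+1) = γ/2 * gcoef γ (K+1) + (2-γ)/2 * gcoef γ K := rfl

lemma gcoef_step (γ : ℝ) : ∀ K : ℕ, gcoef γ (K+1) = -(γ/((K:ℝ)+1)) * gcoef (γ-1) K := by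
  intro K
  induction K with
  | zero => simp [gcoef]
  | succ K ih =>
    rw [gcoef_succ, ih, gcoef_succ]
    have h1 : (K:ℝ)+1 ≠ 0 := by positivity
    have h2 : (K:ℝ)+1+1 ≠ 0 := by positivity
    push_cast
    field_simp
    ring

lemma sum_gcoef (γ : ℝ) : ∀ K : ℕ, ∑ k ∈ range (K+1), gcoef γ k = gcoef (γ-1) K := by
  intro K
  induction K with
  | zero => simp [gcoef]
  | succ K ih =>
    rw [Finset.sum_range_succ, ih, gcoef_step, gcoef_succ]
    have h1 : (K:ℝ)+1 ≠ 0 := by positivity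
    field_simp
    ring

lemma sum_wcoef_s14 (γ : ℝ) : ∀ K : ℕ, Ssum γ (K+1) = γ/2 * gcoef (γ-1) (K+1) + (2-γ)/2 * gcoef (γ-1) K := by
  have key : ∀ K : ℕ, Ssum γ (K+1) = γ/2 * (∑ k ∈ range (K+2), gcoef γ k) + (2-γ)/2 * (∑ k ∈ range (K+1), gcoef γ k) := by
    intro K
    induction K with
    | zero =>
      simp [Ssum, Finset.sum_range_succ, wcoef, gcoef]
      ring
    | succ K ih =>
      rw [Ssum, Finset.sum_range_succ, ← Ssum, ih]
      rw [show K+1+2 = (K+2)+1 from rfl, Finset.sum_range_succ (n := K+2)]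
      rw [show K+1+1 = (K+1)+1 from rfl, Finset.sum_range_succ (n := K+1)]
      rw [wcoef_succ]
      ring
  intro K
  rw [key K, sum_gcoef, sum_gcoef]

-- g^{(β)}_k ≥ 0 for k ≥ 2, 1 < β < 2
lemma gcoef_nonneg (β : ℝ) (hβ1 : 1 < β) (hβ2 : β < 2) : ∀ k, 2 ≤ k → 0 ≤ gcoef β k := by
  intro k hk
  induction k with
  | zero => omega
  | succ k ih =>
    rcases Nat.lt_or_ge k 2 with hk2 | hk2
    · interval_cases k
      · omega
      · show 0 ≤ gcoef β 2
        rw [show (2:ℕ) = 1+1 from rfl, gcoef_succ, gcoef_succ]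
        simp [gcoef]
        nlinarith
    · have h1 : 0 ≤ gcoef β k := ih (by omega)
      rw [gcoef_succ]
      have h2 : (0:ℝ) ≤ 1 - (β+1)/((k:ℝ)+1) := by
        have : (3:ℝ) ≤ (k:ℝ)+1 := by
          have : (2:ℝ) ≤ (k:ℝ) := by exact_mod_cast hk2
          linarith
        have hb : β + 1 ≤ 3 := by linarith
        have : (β+1)/((k:ℝ)+1) ≤ 1 := by
          rw [div_le_one (by linarith)]
          linarith
        linarith
      positivity
-- g^{(μ)}_k ≤ 0 for k ≥ 1, 0 < μ < 1
lemma gcoef_nonpos (μ : ℝ) (hμ1 : 0 < μ) (hμ2 : μ < 1) : ∀ k, 1 ≤ k → gcoef μ k ≤ 0 := by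
  intro k hk
  induction k with
  | zero => omega
  | succ k ih =>
    rcases Nat.lt_or_ge k 1 with hk1 | hk1
    · interval_cases k
      show gcoef μ 1 ≤ 0
      rw [show (1:ℕ) = 0+1 from rfl, gcoef_succ]
      simp [gcoef]
      nlinarith
    · have h1 : gcoef μ k ≤ 0 := ih (by omega)
      rw [gcoef_succ]
      have h2 : (0:ℝ) ≤ 1 - (μ+1)/((k:ℝ)+1) := by
        have : (2:ℝ) ≤ (k:ℝ)+1 := by
          have : (1:ℝ) ≤ (k:ℝ) := by exact_mod_cast hk1
          linarith
        have : (μ+1)/((k:ℝ)+1) ≤ 1 := by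
          rw [div_le_one (by linarith)]
          linarith
        linarith
      nlinarith

lemma gcoef_prod (γ : ℝ) : ∀ K, gcoef γ K = ∏ j ∈ Icc 1 K, (1 - (γ+1)/(j:ℝ)) := by
  intro K
  induction K with
  | zero => simp [gcoef]
  | succ K ih =>
    rw [Finset.prod_Icc_succ_top (by omega), ← ih, gcoef_succ]
    push_cast
    ring

lemma exp_le_one_sub (x : ℝ) (h0 : 0 ≤ x) (h1 : x ≤ 1/2) :
    Real.exp (-(x + 2*x^2)) ≤ 1 - x := by
  have hx1 : (0:ℝ) < 1 - x := by linarith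
  have e0 : 1/(1-x) ≤ 1 + (x + 2*x^2) := by
    rw [div_le_iff₀ hx1]
    nlinarith
  have e1 : 1/(1-x) ≤ Real.exp (x + 2*x^2) := by
    have := Real.add_one_le_exp (x + 2*x^2)
    linarith
  rw [Real.exp_neg]
  have h2 : (0:ℝ) < 1/(1-x) := by positivity
  have h3 : (Real.exp (x+2*x^2))⁻¹ ≤ (1/(1-x))⁻¹ := by
    apply inv_anti₀ h2 e1
  calc (Real.exp (x+2*x^2))⁻¹ ≤ (1/(1-x))⁻¹ := h3
    _ = 1 - x := by field_simp

lemma log_gap (K : ℕ) (hK : 1 ≤ K) : 1/((K:ℝ)+1) ≤ Real.log ((K:ℝ)+1) - Real.log K := by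
  have hK0 : (0:ℝ) < K := by exact_mod_cast hK
  have h1 : Real.log ((K:ℝ)/((K:ℝ)+1)) ≤ (K:ℝ)/((K:ℝ)+1) - 1 :=
    Real.log_le_sub_one_of_pos (by positivity)
  rw [Real.log_div (by positivity) (by positivity)] at h1
  have : (K:ℝ)/((K:ℝ)+1) - 1 = -(1/((K:ℝ)+1)) := by field_simp; ring
  rw [this] at h1
  linarith

lemma prod_lower_aux (μ : ℝ) (hμ1 : 0 < μ) (hμ2 : μ < 1) :
    ∀ K : ℕ, 3 ≤ K → Real.exp (-(μ+1) * (Real.log K - Real.log 3)) * Real.exp (-(8/3 - 8/(K:ℝ))) ≤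
      ∏ j ∈ Icc 4 K, (1 - (μ+1)/(j:ℝ)) := by
  intro K hK
  induction K with
  | zero => omega
  | succ K ih =>
    rcases Nat.lt_or_ge K 3 with h3 | h3
    · have : K = 2 := by omega
      subst this
      rw [show Icc 4 (2+1) = (∅ : Finset ℕ) from rfl]
      simp only [Finset.prod_empty]
      push_cast
      norm_num
    · have hbase := ih h3
      have hK0 : (0:ℝ) < K := by
        have : (3:ℝ) ≤ (K:ℝ) := by exact_mod_cast h3
        linarith
      rw [Finset.prod_Icc_succ_top (by omega)]
      set x : ℝ := (μ+1)/((K:ℝ)+1) with hxdef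
      have hx0 : 0 ≤ x := by positivity
      have hx1 : x ≤ 1/2 := by
        rw [hxdef, div_le_iff₀ (by linarith)]
        have : (3:ℝ) ≤ (K:ℝ) := by exact_mod_cast h3
        linarith
      have step : Real.exp (-(μ+1) * (Real.log ((K:ℝ)+1) - Real.log K)) *
          Real.exp (-(8/(K:ℝ) - 8/((K:ℝ)+1))) ≤ 1 - x := by
        calc Real.exp (-(μ+1) * (Real.log ((K:ℝ)+1) - Real.log K)) *
            Real.exp (-(8/(K:ℝ) - 8/((K:ℝ)+1))) = Real.exp (-((μ+1) * (Real.log ((K:ℝ)+1) - Real.log K) + (8/(K:ℝ) - 8/((K:ℝ)+1)))) := by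
              rw [← Real.exp_add]; ring_nf
          _ ≤ Real.exp (-(x + 2*x^2)) := by
              apply Real.exp_le_exp.mpr
              have l1 : 1/((K:ℝ)+1) ≤ Real.log ((K:ℝ)+1) - Real.log K := log_gap K (by omega)
              have l2 : (μ+1)/((K:ℝ)+1) ≤ (μ+1) * (Real.log ((K:ℝ)+1) - Real.log K) := by
                have := mul_le_mul_of_nonneg_left l1 (by linarith : (0:ℝ) ≤ μ+1)
                calc (μ+1)/((K:ℝ)+1) = (μ+1) * (1/((K:ℝ)+1)) := by ring
                  _ ≤ _ := this
              have l3 : 2*x^2 ≤ 8/(K:ℝ) - 8/((K:ℝ)+1) := by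
                have e : 8/(K:ℝ) - 8/((K:ℝ)+1) = 8/((K:ℝ)*((K:ℝ)+1)) := by
                  field_simp
                  ring
                rw [e, hxdef, div_pow]
                have h4 : (μ+1)^2 ≤ 4 := by nlinarith
                calc 2*((μ+1)^2/((K:ℝ)+1)^2) ≤ 2*(4/((K:ℝ)+1)^2) := by gcongr
                  _ = 8/(((K:ℝ)+1)^2) := by ring
                  _ ≤ 8/((K:ℝ)*((K:ℝ)+1)) := by
                      rw [div_le_div_iff₀ (by positivity) (by positivity)]
                      nlinarith
              simp only [hxdef] at l2 ⊢
              linarith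
          _ ≤ 1 - x := exp_le_one_sub x hx0 hx1
      push_cast
      calc Real.exp (-(μ+1) * (Real.log ((K:ℝ)+1) - Real.log 3)) * Real.exp (-(8/3 - 8/((K:ℝ)+1)))
          = (Real.exp (-(μ+1) * (Real.log K - Real.log 3)) * Real.exp (-(8/3 - 8/(K:ℝ)))) *
            (Real.exp (-(μ+1) * (Real.log ((K:ℝ)+1) - Real.log K)) *
             Real.exp (-(8/(K:ℝ) - 8/((K:ℝ)+1)))) := by
            rw [← Real.exp_add, ← Real.exp_add, ← Real.exp_add, ← Real.exp_add]
            ring_nf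
        _ ≤ (∏ j ∈ Icc 4 K, (1 - (μ+1)/(j:ℝ))) * (1 - x) := by
            apply mul_le_mul hbase step (by positivity) ?_
            calc (0:ℝ) ≤ Real.exp (-(μ+1) * (Real.log K - Real.log 3)) * Real.exp (-(8/3 - 8/(K:ℝ))) := by positivity
              _ ≤ _ := hbase
        _ = _ := by rw [hxdef]; try push_cast; try ring

lemma gcoef_lower (μ : ℝ) (hμ1 : 0 < μ) (hμ2 : μ < 1) (K : ℕ) (hK : 2 ≤ K) :
    μ*(1-μ)*(2-μ)/6 * Real.exp (-3) * (K:ℝ)^(-(μ+1)) ≤ -gcoef μ K := by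
  have hexp1 : Real.exp (-3) ≤ 1 := by
    rw [Real.exp_le_one_iff]; norm_num
  have hKpos : (0:ℝ) < K := by
    have : (2:ℝ) ≤ (K:ℝ) := by exact_mod_cast hK
    linarith
  have hrpow : (K:ℝ)^(-(μ+1)) = Real.exp (-(μ+1) * Real.log K) := by
    rw [Real.rpow_def_of_pos hKpos]
    ring_nf
  rcases Nat.lt_or_ge K 3 with h3 | h3
  · have hK2 : K = 2 := by omega
    subst hK2
    have hg2 : gcoef μ 2 = -(μ*(1-μ)/2) := by
      rw [show (2:ℕ) = 1+1 from rfl, gcoef_succ, gcoef_succ]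
      simp [gcoef]
      push_cast
      ring
    rw [hg2]
    have h2r : ((2:ℕ):ℝ)^(-(μ+1)) ≤ 1 := by
      apply Real.rpow_le_one_of_one_le_of_nonpos (by norm_num) (by linarith)
    have hc : 0 ≤ μ*(1-μ)*(2-μ)/6 := by
      nlinarith [mul_pos (mul_pos hμ1 (by linarith : (0:ℝ) < 1-μ)) (by linarith : (0:ℝ) < 2-μ)]
    have hrp0 : (0:ℝ) ≤ ((2:ℕ):ℝ)^(-(μ+1)) := by positivity
    calc μ*(1-μ)*(2-μ)/6 * Real.exp (-3) * ((2:ℕ):ℝ)^(-(μ+1))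
        ≤ μ*(1-μ)*(2-μ)/6 * 1 * 1 := by
          apply mul_le_mul (mul_le_mul le_rfl hexp1 (Real.exp_nonneg _) hc) h2r hrp0 (by linarith)
      _ = μ*(1-μ)*(2-μ)/6 := by ring
      _ ≤ -(-(μ*(1-μ)/2)) := by nlinarith
  · -- K ≥ 3
    have hsplit : Icc 1 K = Icc 1 3 ∪ Icc 4 K := by
      ext j; simp only [Finset.mem_Icc, Finset.mem_union]; omega
    have hdisj : Disjoint (Icc 1 3) (Icc 4 K) := by
      rw [Finset.disjoint_left]
      intro a ha hb
      simp only [Finset.mem_Icc] at ha hb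
      omega
    have hprod : gcoef μ K = (-μ * ((1-μ)/2) * ((2-μ)/3)) * ∏ j ∈ Icc 4 K, (1 - (μ+1)/(j:ℝ)) := by
      rw [gcoef_prod, hsplit, Finset.prod_union hdisj]
      congr 1
      rw [show Icc (1:ℕ) 3 = {1, 2, 3} from rfl,
        Finset.prod_insert (by decide), Finset.prod_insert (by decide), Finset.prod_singleton]
      norm_num
      ring
    have hplow := prod_lower_aux μ hμ1 hμ2 K h3
    have hlow2 : Real.exp (-3) * (K:ℝ)^(-(μ+1)) ≤ ∏ j ∈ Icc 4 K, (1 - (μ+1)/(j:ℝ)) := by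
      refine le_trans ?_ hplow
      rw [hrpow]
      rw [← Real.exp_add, ← Real.exp_add]
      apply Real.exp_le_exp.mpr
      have hlog3 : 0 ≤ Real.log 3 := Real.log_nonneg (by norm_num)
      have h8K : 0 < 8/(K:ℝ) := by positivity
      nlinarith
    calc μ*(1-μ)*(2-μ)/6 * Real.exp (-3) * (K:ℝ)^(-(μ+1))
        = (μ*(1-μ)*(2-μ)/6) * (Real.exp (-3) * (K:ℝ)^(-(μ+1))) := by ring
      _ ≤ (μ*(1-μ)*(2-μ)/6) * ∏ j ∈ Icc 4 K, (1 - (μ+1)/(j:ℝ)) := by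
          apply mul_le_mul_of_nonneg_left hlow2
          nlinarith [mul_pos (mul_pos hμ1 (by linarith : (0:ℝ) < 1-μ)) (by linarith : (0:ℝ) < 2-μ)]
      _ = -gcoef μ K := by rw [hprod]; ring

variable {β : ℝ}

lemma wcoef_nonneg (hβ1 : 1 < β) (hβ2 : β < 2) : ∀ k, 3 ≤ k → 0 ≤ wcoef β k := by
  intro k hk
  obtain ⟨m, rfl⟩ : ∃ m, k = m + 1 := ⟨k-1, by omega⟩
  show 0 ≤ β / 2 * gcoef β (m + 1) + (2 - β) / 2 * gcoef β m
  have h1 := gcoef_nonneg β hβ1 hβ2 (m+1) (by omega)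
  have h2 := gcoef_nonneg β hβ1 hβ2 m (by omega)
  have : (0:ℝ) ≤ β/2 := by linarith
  have : (0:ℝ) ≤ (2-β)/2 := by linarith
  positivity

lemma wcoef_zero (β : ℝ) : wcoef β 0 = β/2 := by simp [wcoef, gcoef]

lemma wcoef_one_nonpos (hβ1 : 1 < β) : wcoef β 1 ≤ 0 := by
  show β / 2 * gcoef β 1 + (2 - β) / 2 * gcoef β 0 ≤ 0
  have h1 : gcoef β 1 = -β := by
    rw [show (1:ℕ) = 0+1 from rfl, gcoef_succ]; simp [gcoef]; try push_cast; try ring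
  rw [h1]
  show β / 2 * (-β) + (2-β)/2 * gcoef β 0 ≤ 0
  simp only [gcoef]
  nlinarith

lemma wcoef_02_nonneg (hβ1 : 1 < β) (hβ2 : β < 2) : 0 ≤ wcoef β 0 + wcoef β 2 := by
  have h1 : gcoef β 1 = -β := by
    rw [show (1:ℕ) = 0+1 from rfl, gcoef_succ]; simp [gcoef]; try push_cast; try ring
  have h2 : gcoef β 2 = β*(β-1)/2 := by
    rw [show (2:ℕ) = 1+1 from rfl, gcoef_succ, h1]; push_cast; ring
  show 0 ≤ β / 2 * gcoef β 0 + (β / 2 * gcoef β 2 + (2 - β) / 2 * gcoef β 1)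
  rw [h1, h2]
  show (0:ℝ) ≤ β / 2 * 1 + (β / 2 * (β * (β - 1) / 2) + (2 - β) / 2 * -β)
  nlinarith [mul_pos (by linarith : (0:ℝ) < β) (by linarith : (0:ℝ) < β - 1)]

lemma Ssum_nonpos (hβ1 : 1 < β) (hβ2 : β < 2) (K : ℕ) (hK : 2 ≤ K) : Ssum β K ≤ 0 := by
  obtain ⟨m, rfl⟩ : ∃ m, K = m + 1 := ⟨K-1, by omega⟩
  rw [sum_wcoef_s14]
  have h1 := gcoef_nonpos (β-1) (by linarith) (by linarith) (m+1) (by omega)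
  have h2 := gcoef_nonpos (β-1) (by linarith) (by linarith) m (by omega)
  nlinarith

lemma Ssum_mono (hβ1 : 1 < β) (hβ2 : β < 2) (K K' : ℕ) (hK : 2 ≤ K) (hKK : K ≤ K') : Ssum β K ≤ Ssum β K' := by
  have : Ssum β K' = Ssum β K + ∑ k ∈ Ico (K+1) (K'+1), wcoef β k := by
    rw [Ssum, Ssum, Finset.range_eq_Ico, Finset.range_eq_Ico]
    exact (Finset.sum_Ico_consecutive (wcoef β) (by omega : 0 ≤ K+1) (by omega : K+1 ≤ K'+1)).symm
  rw [this]
  have : 0 ≤ ∑ k ∈ Ico (K+1) (K'+1), wcoef β k := by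
    apply Finset.sum_nonneg
    intro k hk
    simp only [Finset.mem_Ico] at hk
    exact wcoef_nonneg hβ1 hβ2 k (by omega)
  linarith

lemma Ssum_lower (hβ1 : 1 < β) (hβ2 : β < 2) (N : ℕ) (hN : 3 ≤ N) :
    β/2 * ((β-1)*(2-β)*(3-β)/6 * Real.exp (-3)) * (N:ℝ)^(-β) ≤ -Ssum β (N-1) := by
  obtain ⟨m, hm⟩ : ∃ m, N - 1 = m + 1 := ⟨N-2, by omega⟩
  rw [hm, sum_wcoef_s14]
  have hμ1 : (0:ℝ) < β - 1 := by linarith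
  have hμ2 : β - 1 < 1 := by linarith
  have h2 := gcoef_nonpos (β-1) hμ1 hμ2 m (by omega)
  have hlow := gcoef_lower (β-1) hμ1 hμ2 (m+1) (by omega)
  have hmm : ((m:ℝ)+1) = ((N:ℝ)-1) := by
    have : (N:ℝ) = ((m:ℕ):ℝ) + 2 := by
      have : N = m + 2 := by omega
      rw [this]; push_cast; ring
    rw [this]; ring
  have hcast : ((m+1:ℕ):ℝ) = (N:ℝ)-1 := by push_cast; rw [hmm]
  have hexp : (β-1) + 1 = β := by ring
  rw [hcast, hexp] at hlow
  have hrpow : (N:ℝ)^(-β) ≤ ((N:ℝ)-1)^(-β) := by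
    apply Real.rpow_le_rpow_of_nonpos (by
      have : (3:ℝ) ≤ (N:ℝ) := by exact_mod_cast hN
      linarith) (by linarith) (by linarith)
  have hc : (0:ℝ) ≤ (β-1)*(2-β)*(3-β)/6 * Real.exp (-3) := by
    have := Real.exp_nonneg (-3:ℝ)
    nlinarith [mul_pos (mul_pos hμ1 (by linarith : (0:ℝ) < 2-β)) (by linarith : (0:ℝ) < 3-β)]
  have step1 : β/2 * ((β-1)*(2-β)*(3-β)/6 * Real.exp (-3)) * (N:ℝ)^(-β)
      ≤ β/2 * ((β-1)*(2-β)*(3-β)/6 * Real.exp (-3)) * ((N:ℝ)-1)^(-β) := by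
    apply mul_le_mul_of_nonneg_left hrpow
    nlinarith
  refine le_trans step1 ?_
  have step2 : (β-1)*(2-β)*(3-β)/6 * Real.exp (-3) * ((N:ℝ)-1)^(-β) ≤ -gcoef (β-1) (m+1) := by
    calc (β-1)*(2-β)*(3-β)/6 * Real.exp (-3) * ((N:ℝ)-1)^(-β)
        = (β-1)*(2-(β-1)-1)*(3-β)/6 * Real.exp (-3) * ((N:ℝ)-1)^(-β) := by ring_nf
      _ ≤ -gcoef (β-1) (m+1) := by
          convert hlow using 2
          ring
  have hb2 : (0:ℝ) ≤ β/2 := by linarith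
  have hb3 : (0:ℝ) ≤ (2-β)/2 := by linarith
  nlinarith [mul_le_mul_of_nonneg_left step2 hb2, mul_nonneg hb3 (neg_nonneg.mpr h2)]

section Quad

variable {β : ℝ} {N : ℕ} {v : ℕ → ℝ}

lemma rowPlus (hN : 3 ≤ N) (h0 : v 0 = 0) (hvN : v N = 0) {i : ℕ} (hi : i ∈ Icc 1 (N-1)) :
    ∑ k ∈ range (i+2), wcoef β k * v (i+1-k) = ∑ j ∈ Icc 1 (N-1), cmat β i j * v j := by
  simp only [Finset.mem_Icc] at hi
  have e1 : ∑ k ∈ range (i+2), wcoef β k * v (i+1-k)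
      = ∑ j ∈ range (i+2), wcoef β (i+1-j) * v j := by
    rw [← Finset.sum_range_reflect (fun j => wcoef β (i+1-j) * v j) (i+2)]
    apply Finset.sum_congr rfl
    intro k hk
    simp only [Finset.mem_range] at hk
    have h1 : i + 2 - 1 - k = i + 1 - k := by omega
    have h2 : i + 1 - (i + 1 - k) = k := by omega
    rw [h1, h2]
  have e2 : ∑ j ∈ range (i+2), wcoef β (i+1-j) * v j = ∑ j ∈ range (i+2), cmat β i j * v j := by
    apply Finset.sum_congr rfl
    intro j hj
    simp only [Finset.mem_range] at hj
    rw [cmat, if_pos (by omega)]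
  have e3 : ∑ j ∈ range (i+2), cmat β i j * v j = ∑ j ∈ Icc 0 N, cmat β i j * v j := by
    apply Finset.sum_subset
    · intro j hj
      simp only [Finset.mem_range] at hj
      simp only [Finset.mem_Icc]
      omega
    · intro j hj hj2
      simp only [Finset.mem_Icc] at hj
      simp only [Finset.mem_range] at hj2
      rw [cmat, if_neg (by omega), zero_mul]
  have e4 : ∑ j ∈ Icc 1 (N-1), cmat β i j * v j = ∑ j ∈ Icc 0 N, cmat β i j * v j := by
    apply Finset.sum_subset
    · intro j hj
      simp only [Finset.mem_Icc] at hj ⊢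
      omega
    · intro j hj hj2
      simp only [Finset.mem_Icc] at hj hj2
      have : j = 0 ∨ j = N := by omega
      rcases this with h | h <;> subst h <;> simp [h0, hvN]
  rw [e1, e2, e3, ← e4]

lemma rowMinus (hN : 3 ≤ N) (h0 : v 0 = 0) (hvN : v N = 0) {i : ℕ} (hi : i ∈ Icc 1 (N-1)) :
    ∑ k ∈ range (N-i+2), wcoef β k * v (i+k-1) = ∑ j ∈ Icc 1 (N-1), cmat β j i * v j := by
  simp only [Finset.mem_Icc] at hi
  have e1 : ∑ j ∈ Icc (i-1) N, cmat β j i * v j = ∑ k ∈ range (N-i+2), wcoef β k * v (i+k-1) := by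
    rw [show Icc (i-1) N = Ico (i-1) (N+1) by rw [Finset.Ico_add_one_right_eq_Icc]]
    rw [Finset.sum_Ico_eq_sum_range]
    apply Finset.sum_congr (by congr 1 <;> omega)
    intro k hk
    simp only [Finset.mem_range] at hk
    rw [cmat, if_pos (by omega)]
    have h1 : i - 1 + k + 1 - i = k := by omega
    have h2 : i - 1 + k = i + k - 1 := by omega
    rw [h1, h2]
  have e2 : ∑ j ∈ Icc (i-1) N, cmat β j i * v j = ∑ j ∈ Icc 0 N, cmat β j i * v j := by
    apply Finset.sum_subset
    · intro j hj
      simp only [Finset.mem_Icc] at hj ⊢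
      omega
    · intro j hj hj2
      simp only [Finset.mem_Icc] at hj hj2
      rw [cmat, if_neg (by omega), zero_mul]
  have e4 : ∑ j ∈ Icc 1 (N-1), cmat β j i * v j = ∑ j ∈ Icc 0 N, cmat β j i * v j := by
    apply Finset.sum_subset
    · intro j hj
      simp only [Finset.mem_Icc] at hj ⊢
      omega
    · intro j hj hj2
      simp only [Finset.mem_Icc] at hj hj2
      have : j = 0 ∨ j = N := by omega
      rcases this with h | h <;> subst h <;> simp [h0, hvN]
  rw [← e1, e2, ← e4]

lemma Qswap :
    ∑ i ∈ Icc 1 (N-1), ∑ j ∈ Icc 1 (N-1), cmat β j i * v j * v i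
      = ∑ i ∈ Icc 1 (N-1), ∑ j ∈ Icc 1 (N-1), cmat β i j * v j * v i := by
  rw [Finset.sum_comm]
  apply Finset.sum_congr rfl
  intro i _
  apply Finset.sum_congr rfl
  intro j _
  ring

end Quad

section Quad2
variable {β : ℝ} {N : ℕ} {v : ℕ → ℝ}

lemma rowsum_le (hβ1 : 1 < β) (hβ2 : β < 2) (hN : 3 ≤ N) {i : ℕ} (hi : i ∈ Icc 1 (N-1)) :
    (∑ j ∈ Icc 1 (N-1), cmat β i j) + (∑ j ∈ Icc 1 (N-1), cmat β j i) ≤ Ssum β (N-1) := by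
  simp only [Finset.mem_Icc] at hi
  -- row sum computation
  have row_small : i ≤ N-2 → ∑ j ∈ Icc 1 (N-1), cmat β i j = Ssum β i := by
    intro hile
    have e1 : ∑ j ∈ Icc 1 (N-1), cmat β i j = ∑ j ∈ Icc 1 (i+1), cmat β i j := by
      symm
      apply Finset.sum_subset
      · intro j hj; simp only [Finset.mem_Icc] at hj ⊢; omega
      · intro j hj hj2
        simp only [Finset.mem_Icc] at hj hj2
        rw [cmat, if_neg (by omega)]
    rw [e1, show Icc 1 (i+1) = Ico 1 (i+2) by ext x; simp only [Finset.mem_Icc, Finset.mem_Ico]; omega,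
      Finset.sum_Ico_eq_sum_range]
    have e2 : ∀ k ∈ range (i+2-1), cmat β i (1+k) = wcoef β (i-k) := by
      intro k hk
      simp only [Finset.mem_range] at hk
      rw [cmat, if_pos (by omega)]
      congr 1 <;> omega
    rw [Finset.sum_congr (by congr 1 <;> omega) e2, show i+2-1 = i+1 by omega]
    rw [Ssum, ← Finset.sum_range_reflect (fun k => wcoef β k) (i+1)]
    exact Finset.sum_congr rfl fun k hk => by congr 1 <;> omega
  have row_big : i = N-1 → ∑ j ∈ Icc 1 (N-1), cmat β i j = Ssum β (N-1) - wcoef β 0 := by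
    intro hie
    subst hie
    have e2 : ∀ j ∈ Icc 1 (N-1), cmat β (N-1) j = wcoef β (N-j) := by
      intro j hj
      simp only [Finset.mem_Icc] at hj
      rw [cmat, if_pos (by omega)]
      congr 1 <;> omega
    rw [Finset.sum_congr rfl e2]
    rw [show Icc 1 (N-1) = Ico 1 N by ext x; simp only [Finset.mem_Icc, Finset.mem_Ico]; omega,
      Finset.sum_Ico_eq_sum_range]
    have e3 : ∀ k ∈ range (N-1), wcoef β (N-(1+k)) = (fun k => wcoef β (k+1)) (N-1-1-k) := by
      intro k hk
      simp only [Finset.mem_range] at hk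
      simp only
      congr 1 <;> omega
    rw [Finset.sum_congr (by congr 1) e3, Finset.sum_range_reflect (fun k => wcoef β (k+1)) (N-1)]
    have : Ssum β (N-1) = ∑ k ∈ range (N-1+1), wcoef β k := rfl
    rw [this, Finset.sum_range_succ']
    simp
  have col_small : 2 ≤ i → ∑ j ∈ Icc 1 (N-1), cmat β j i = Ssum β (N-i) := by
    intro hige
    have e1 : ∑ j ∈ Icc 1 (N-1), cmat β j i = ∑ j ∈ Icc (i-1) (N-1), cmat β j i := by
      symm
      apply Finset.sum_subset
      · intro j hj; simp only [Finset.mem_Icc] at hj ⊢; omega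
      · intro j hj hj2
        simp only [Finset.mem_Icc] at hj hj2
        rw [cmat, if_neg (by omega)]
    rw [e1, show Icc (i-1) (N-1) = Ico (i-1) N by ext x; simp only [Finset.mem_Icc, Finset.mem_Ico]; omega,
      Finset.sum_Ico_eq_sum_range]
    have e2 : ∀ k ∈ range (N-(i-1)), cmat β (i-1+k) i = wcoef β k := by
      intro k hk
      rw [cmat, if_pos (by omega)]
      congr 1 <;> omega
    rw [Finset.sum_congr (by congr 1 <;> omega) e2, show N-(i-1) = (N-i)+1 by omega, Ssum]
  have col_one : i = 1 → ∑ j ∈ Icc 1 (N-1), cmat β j i = Ssum β (N-1) - wcoef β 0 := by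
    intro hie
    subst hie
    have e2 : ∀ j ∈ Icc 1 (N-1), cmat β j 1 = wcoef β j := by
      intro j hj
      simp only [Finset.mem_Icc] at hj
      rw [cmat, if_pos (by omega)]
      congr 1 <;> omega
    rw [Finset.sum_congr rfl e2]
    rw [show Icc 1 (N-1) = Ico 1 N by ext x; simp only [Finset.mem_Icc, Finset.mem_Ico]; omega,
      Finset.sum_Ico_eq_sum_range]
    have e3 : ∀ k ∈ range (N-1), wcoef β (1+k) = wcoef β (k+1) := by
      intro k _; congr 1 <;> omega
    rw [Finset.sum_congr rfl e3]
    have e4 : Ssum β (N-1) = ∑ k ∈ range ((N-1)+1), wcoef β k := rfl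
    rw [e4, Finset.sum_range_succ']
    simp
  -- case analysis
  have hS1 : Ssum β 1 = wcoef β 0 + wcoef β 1 := by
    rw [Ssum]
    rw [Finset.sum_range_succ, Finset.sum_range_one]
  rcases Nat.lt_or_ge i 2 with hi1 | hi2
  · have hie : i = 1 := by omega
    rw [row_small (by omega), col_one hie, hie, hS1]
    have := wcoef_one_nonpos hβ1
    linarith
  · rcases Nat.lt_or_ge i (N-1) with hiN | hiN
    · -- 2 ≤ i ≤ N-2
      rw [row_small (by omega), col_small hi2]
      have h1 : Ssum β i ≤ Ssum β (N-1) := Ssum_mono hβ1 hβ2 i (N-1) (by omega) (by omega)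
      have h2 : Ssum β (N-i) ≤ Ssum β (N-1) := Ssum_mono hβ1 hβ2 (N-i) (N-1) (by omega) (by omega)
      have h3 : Ssum β (N-1) ≤ 0 := Ssum_nonpos hβ1 hβ2 (N-1) (by omega)
      linarith
    · have hie : i = N-1 := by omega
      rw [row_big hie, col_small (by omega), hie, show N-(N-1) = 1 by omega, hS1]
      have := wcoef_one_nonpos hβ1
      linarith

end Quad2

section Quad3
variable {β : ℝ} {N : ℕ} {v : ℕ → ℝ}

lemma coeff_nonneg (hβ1 : 1 < β) (hβ2 : β < 2) {i j : ℕ} (hij : i ≠ j) :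
    0 ≤ cmat β i j + cmat β j i := by
  wlog h : j < i generalizing i j
  · rw [add_comm]; exact this hij.symm (by omega)
  rcases Nat.lt_or_ge (j+1) i with h2 | h2
  · simp only [cmat]
    rw [if_pos (by omega), if_neg (by omega)]
    have := wcoef_nonneg hβ1 hβ2 (i+1-j) (by omega)
    linarith
  · have : i = j+1 := by omega
    subst this
    simp only [cmat]
    rw [if_pos (by omega), if_pos (by omega)]
    rw [show j+1+1-j = 2 by omega, show j+1-(j+1) = 0 by omega]
    have := wcoef_02_nonneg hβ1 hβ2
    linarith

lemma quad_lower (hβ1 : 1 < β) (hβ2 : β < 2) (hN : 3 ≤ N) :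
    (-Ssum β (N-1))/2 * ∑ i ∈ Icc 1 (N-1), (v i)^2
      ≤ -∑ i ∈ Icc 1 (N-1), ∑ j ∈ Icc 1 (N-1), cmat β i j * v j * v i := by
  set I := Icc 1 (N-1) with hI
  set Q := ∑ i ∈ I, ∑ j ∈ I, cmat β i j * v j * v i with hQ
  have h2Q : 2*Q = ∑ i ∈ I, ∑ j ∈ I, (cmat β i j + cmat β j i) * (v j * v i) := by
    have := (Qswap (β := β) (N := N) (v := v))
    calc 2*Q = Q + ∑ i ∈ I, ∑ j ∈ I, cmat β j i * v j * v i := by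
          rw [this]; ring
      _ = ∑ i ∈ I, ∑ j ∈ I, (cmat β i j + cmat β j i) * (v j * v i) := by
          rw [hQ, ← Finset.sum_add_distrib]
          apply Finset.sum_congr rfl
          intro i _
          rw [← Finset.sum_add_distrib]
          apply Finset.sum_congr rfl
          intro j _
          ring
  have hpt : ∀ i ∈ I, ∀ j ∈ I, (cmat β i j + cmat β j i) * (v j * v i)
      ≤ (cmat β i j + cmat β j i) * (((v i)^2 + (v j)^2)/2) := by
    intro i _ j _
    rcases eq_or_ne i j with rfl | hij
    · apply le_of_eq
      ring
    · apply mul_le_mul_of_nonneg_left _ (coeff_nonneg hβ1 hβ2 hij)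
      nlinarith [sq_nonneg (v i - v j)]
  have step1 : 2*Q ≤ ∑ i ∈ I, ∑ j ∈ I, (cmat β i j + cmat β j i) * (((v i)^2 + (v j)^2)/2) := by
    rw [h2Q]
    apply Finset.sum_le_sum
    intro i hi
    exact Finset.sum_le_sum fun j hj => hpt i hi j hj
  have step2 : ∑ i ∈ I, ∑ j ∈ I, (cmat β i j + cmat β j i) * (((v i)^2 + (v j)^2)/2)
      = ∑ i ∈ I, ∑ j ∈ I, (cmat β i j + cmat β j i) * (v i)^2 := by
    have e1 : ∑ i ∈ I, ∑ j ∈ I, (cmat β i j + cmat β j i) * (((v i)^2 + (v j)^2)/2)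
        = (∑ i ∈ I, ∑ j ∈ I, (cmat β i j + cmat β j i) * (v i)^2)/2
          + (∑ i ∈ I, ∑ j ∈ I, (cmat β i j + cmat β j i) * (v j)^2)/2 := by
      rw [Finset.sum_div, Finset.sum_div, ← Finset.sum_add_distrib]
      apply Finset.sum_congr rfl
      intro i _
      rw [Finset.sum_div, Finset.sum_div, ← Finset.sum_add_distrib]
      apply Finset.sum_congr rfl
      intro j _
      ring
    have e2 : ∑ i ∈ I, ∑ j ∈ I, (cmat β i j + cmat β j i) * (v j)^2
        = ∑ i ∈ I, ∑ j ∈ I, (cmat β i j + cmat β j i) * (v i)^2 := by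
      rw [Finset.sum_comm]
      apply Finset.sum_congr rfl
      intro i _
      apply Finset.sum_congr rfl
      intro j _
      ring
    rw [e1, e2]
    ring
  have step3 : ∑ i ∈ I, ∑ j ∈ I, (cmat β i j + cmat β j i) * (v i)^2
      ≤ ∑ i ∈ I, Ssum β (N-1) * (v i)^2 := by
    apply Finset.sum_le_sum
    intro i hi
    have hrc := rowsum_le hβ1 hβ2 hN hi
    calc ∑ j ∈ I, (cmat β i j + cmat β j i) * (v i)^2
        = ((∑ j ∈ I, cmat β i j) + (∑ j ∈ I, cmat β j i)) * (v i)^2 := by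
          rw [← Finset.sum_add_distrib, ← Finset.sum_mul]
      _ ≤ Ssum β (N-1) * (v i)^2 := by
          apply mul_le_mul_of_nonneg_right hrc (sq_nonneg _)
  have final : 2*Q ≤ Ssum β (N-1) * ∑ i ∈ I, (v i)^2 := by
    have : Ssum β (N-1) * ∑ i ∈ I, (v i)^2 = ∑ i ∈ I, Ssum β (N-1) * (v i)^2 := by
      rw [Finset.mul_sum]
    rw [this]
    exact le_trans step1 (le_trans (le_of_eq step2) step3)
  linarith

end Quad3

theorem stmt14 (β L : ℝ) (hβ1 : 1 < β) (hβ2 : β < 2) (hL : 0 < L) :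
    ∃ c₂ : ℝ, 0 < c₂ ∧ ∀ N : ℕ, 3 ≤ N → ∀ v : ℕ → ℝ,
      v 0 = 0 → v N = 0 → (∃ i ≤ N, v i ≠ 0) →
      ip N (L / N) (fun i => -dplus β (L / N) v i) v =
        ip N (L / N) (fun i => -dminus β N (L / N) v i) v ∧
      c₂ * Real.log 2 * (gnorm N (L / N) v) ^ 2 <
        ip N (L / N) (fun i => -dplus β (L / N) v i) v := by
  set A : ℝ := β/2 * ((β-1)*(2-β)*(3-β)/6 * Real.exp (-3)) with hA
  have hApos : 0 < A := by
    have h1 : (0:ℝ) < β - 1 := by linarith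
    have h2 : (0:ℝ) < 2 - β := by linarith
    have h3 : (0:ℝ) < 3 - β := by linarith
    have h4 : (0:ℝ) < Real.exp (-3) := Real.exp_pos _
    have h5 : (0:ℝ) < β/2 := by linarith
    rw [hA]
    positivity
  have hlog2 : 0 < Real.log 2 := Real.log_pos (by norm_num)
  have hLβ : 0 < L ^ β := Real.rpow_pos_of_pos hL β
  refine ⟨A / (4 * Real.log 2 * L^β), by positivity, ?_⟩
  intro N hN v h0 hvN hex
  set h : ℝ := L / (N:ℝ) with hh
  have hNpos : (0:ℝ) < (N:ℝ) := by
    have : (3:ℝ) ≤ (N:ℝ) := by exact_mod_cast hN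
    linarith
  have hpos : 0 < h := by rw [hh]; positivity
  set I := Icc 1 (N-1) with hI
  set Q := ∑ i ∈ I, ∑ j ∈ I, cmat β i j * v j * v i with hQdef
  -- ip plus form
  have eplus : ip N h (fun i => -dplus β h v i) v = h * (-(h^(-β)) * Q) := by
    rw [ip]
    congr 1
    rw [hQdef, Finset.mul_sum]
    apply Finset.sum_congr rfl
    intro i hi
    show -dplus β h v i * v i = _
    rw [dplus, rowPlus hN h0 hvN hi]
    rw [← Finset.sum_mul]
    ring
  have eminus : ip N h (fun i => -dminus β N h v i) v = h * (-(h^(-β)) * Q) := by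
    rw [ip]
    congr 1
    rw [hQdef, ← Qswap, Finset.mul_sum]
    apply Finset.sum_congr rfl
    intro i hi
    show -dminus β N h v i * v i = _
    rw [dminus, rowMinus hN h0 hvN hi]
    rw [← Finset.sum_mul]
    ring
  set P := ∑ i ∈ I, (v i)^2 with hP
  have hPpos : 0 < P := by
    obtain ⟨i₀, hi₀N, hi₀⟩ := hex
    have hi₀I : i₀ ∈ I := by
      rw [hI, Finset.mem_Icc]
      rcases Nat.eq_zero_or_pos i₀ with h | h
      · exfalso; apply hi₀; rw [h]; exact h0
      · constructor
        · omega
        · rcases Nat.lt_or_ge i₀ N with h2 | h2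
          · omega
          · exfalso; apply hi₀
            have : i₀ = N := by omega
            rw [this]; exact hvN
    rw [hP]
    apply Finset.sum_pos' (fun i _ => sq_nonneg _) ⟨i₀, hi₀I, by positivity⟩
  -- norm identity
  have hnorm : (gnorm N h v)^2 = h * P := by
    rw [gnorm, Real.sq_sqrt]
    · rw [ip, hP]
      congr 1
      apply Finset.sum_congr rfl
      intro i _
      ring
    · rw [ip]
      apply mul_nonneg hpos.le
      apply Finset.sum_nonneg
      intro i _
      exact mul_self_nonneg _
  -- main lower bound
  have hQlow : (-Ssum β (N-1))/2 * P ≤ -Q := quad_lower hβ1 hβ2 hN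
  have hSlow : A * (N:ℝ)^(-β) ≤ -Ssum β (N-1) := Ssum_lower hβ1 hβ2 N hN
  have hrpowN : (0:ℝ) < (N:ℝ)^(-β) := Real.rpow_pos_of_pos hNpos _
  have hrpowh : (0:ℝ) < h^(-β) := Real.rpow_pos_of_pos hpos _
  have hhN : h^(-β) * (N:ℝ)^(-β) = L^(-β) := by
    rw [← Real.mul_rpow hpos.le hNpos.le, hh]
    congr 1
    field_simp
  have hLinv : L^(-β) = (L^β)⁻¹ := Real.rpow_neg hL.le β
  have key : A / (4 * Real.log 2 * L^β) * Real.log 2 * (h * P) < h * (-(h^(-β)) * Q) := by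
    have c1 : A / (4 * Real.log 2 * L^β) * Real.log 2 * (h * P)
        = A / 4 * (L^β)⁻¹ * h * P := by
      field_simp
    have c2 : A * (N:ℝ)^(-β) / 2 * P ≤ -Q := by
      apply le_trans _ hQlow
      apply mul_le_mul_of_nonneg_right _ hPpos.le
      linarith
    have c3 : h * (h^(-β) * (A * (N:ℝ)^(-β) / 2 * P)) ≤ h * (h^(-β) * (-Q)) := by
      apply mul_le_mul_of_nonneg_left _ hpos.le
      exact mul_le_mul_of_nonneg_left c2 hrpowh.le
    have c4 : h * (h^(-β) * (A * (N:ℝ)^(-β) / 2 * P)) = A / 2 * (L^β)⁻¹ * h * P := by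
      rw [← hLinv]
      calc h * (h^(-β) * (A * (N:ℝ)^(-β) / 2 * P))
          = (h^(-β) * (N:ℝ)^(-β)) * (A / 2) * h * P := by ring
        _ = A / 2 * L^(-β) * h * P := by rw [hhN]; ring
        _ = A / 2 * L^(-β) * h * P := rfl
    have c5 : A / 4 * (L^β)⁻¹ * h * P < A / 2 * (L^β)⁻¹ * h * P := by
      have : (0:ℝ) < (L^β)⁻¹ * h * P := by positivity
      nlinarith
    rw [c1]
    calc A / 4 * (L^β)⁻¹ * h * P < A / 2 * (L^β)⁻¹ * h * P := c5
      _ = h * (h^(-β) * (A * (N:ℝ)^(-β) / 2 * P)) := c4.symm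
      _ ≤ h * (h^(-β) * (-Q)) := c3
      _ = h * (-(h^(-β)) * Q) := by ring
  constructor
  · rw [eplus, eminus]
  · rw [eplus, hnorm]
    exact key
end
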